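/- Let p ≥ 2 be a real number and let β be a real number with 0 ≤ β < 2^{p−1} − 1. Then for every s ∈ (0,1) one has s^p + (1 − s)^p + 2β s^{p/2} (1 − s)^{p/2} < 1. -/

import Mathlib

open Real Set

/-- Generic integration lemma: if the derivative bound holds on `(1,∞)`,
the function `t ↦ (1+t)^κ - t^κ - c*t^m - d` is ≥ its value at 1 on `[1,∞)`. -/
lemma key_mono (κ c m d : ℝ)
    (hder : ∀ t : ℝ, 1 < t → c * (m * t ^ (m-1)) ≤ κ * (1+t) ^ (κ-1) - κ * t ^ (κ-1)) :
    ∀ t : ℝ, 1 ≤ t → (2:ℝ) ^ κ - 1 - c - d ≤ (1+t) ^ κ - t ^ κ - c * t ^ m - d := by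
  intro t ht
  set f : ℝ → ℝ := fun x => (1+x) ^ κ - x ^ κ - c * x ^ m - d with hf
  have hd : ∀ x : ℝ, 0 < x →
      HasDerivAt f (κ * (1+x) ^ (κ-1) - κ * x ^ (κ-1) - c * (m * x ^ (m-1))) x := by
    intro x hx
    have h1 : HasDerivAt (fun y : ℝ => (1+y) ^ κ) (κ * (1+x) ^ (κ-1)) x := by
      have hg : HasDerivAt (fun y : ℝ => 1 + y) 1 x := by
        simpa using (hasDerivAt_id x).const_add (1:ℝ)
      have := (Real.hasDerivAt_rpow_const (x := 1+x) (p := κ)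
        (Or.inl (by positivity))).comp x hg
      rw [mul_one] at this
      exact this
    have h2 : HasDerivAt (fun y : ℝ => y ^ κ) (κ * x ^ (κ-1)) x :=
      Real.hasDerivAt_rpow_const (Or.inl hx.ne')
    have h3 : HasDerivAt (fun y : ℝ => c * y ^ m) (c * (m * x ^ (m-1))) x :=
      (Real.hasDerivAt_rpow_const (Or.inl hx.ne')).const_mul c
    exact ((h1.sub h2).sub h3).sub_const d
  have hmono : MonotoneOn f (Ici 1) := by
    apply monotoneOn_of_deriv_nonneg (convex_Ici 1)
    · intro x hx
      exact (hd x (by simp only [mem_Ici] at hx; linarith)).continuousAt.continuousWithinAt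
    · intro x hx
      rw [interior_Ici] at hx
      exact (hd x (by simp only [mem_Ioi] at hx; linarith)).differentiableAt.differentiableWithinAt
    · intro x hx
      rw [interior_Ici] at hx
      simp only [mem_Ioi] at hx
      rw [(hd x (by linarith)).deriv]
      have := hder x hx
      linarith
  have h01 := hmono (Set.mem_Ici.mpr le_rfl) (show t ∈ Ici (1:ℝ) from ht) ht
  have hf1 : f 1 = (2:ℝ) ^ κ - 1 - c - d := by
    simp [hf, Real.one_rpow]
    norm_num
  rw [hf1] at h01
  exact h01

/-- Concave chord bound: for `0 ≤ λ ≤ 1`, `0 ≤ x ≤ 1`: `1 + (2^λ - 1)x ≤ (1+x)^λ`. -/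
lemma chord (lam x : ℝ) (h0 : 0 ≤ lam) (h1 : lam ≤ 1) (hx0 : 0 ≤ x) (hx1 : x ≤ 1) :
    1 + ((2:ℝ) ^ lam - 1) * x ≤ (1+x) ^ lam := by
  rcases eq_or_lt_of_le h0 with h | h0'
  · simp [← h]
  rcases eq_or_lt_of_le h1 with h | h1'
  · rw [h]; norm_num
  have hcc : ConcaveOn ℝ (Set.Ici 0) fun y : ℝ ↦ y ^ lam :=
    (Real.strictConcaveOn_rpow h0' h1').concaveOn
  have := hcc.2 (show (1:ℝ) ∈ Ici (0:ℝ) by norm_num) (show (2:ℝ) ∈ Ici (0:ℝ) by norm_num)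
    (by linarith : (0:ℝ) ≤ 1 - x) hx0 (by ring)
  simp only [smul_eq_mul] at this
  have he : (1-x) * 1 + x * 2 = 1 + x := by ring
  rw [he] at this
  rw [Real.one_rpow] at this
  linarith [this]

/-- base difference bound: for `0 ≤ λ ≤ 1`, `t ≥ 1`:
`(2^λ - 1) t^(λ-1) ≤ (1+t)^λ - t^λ`. -/
lemma base_diff (lam t : ℝ) (h0 : 0 ≤ lam) (h1 : lam ≤ 1) (ht : 1 ≤ t) :
    ((2:ℝ) ^ lam - 1) * t ^ (lam - 1) ≤ (1+t) ^ lam - t ^ lam := by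
  have ht0 : (0:ℝ) < t := by linarith
  have hx0 : (0:ℝ) ≤ 1/t := by positivity
  have hx1 : 1/t ≤ 1 := by rw [div_le_one ht0]; exact ht
  have hch := chord lam (1/t) h0 h1 hx0 hx1
  -- multiply by t^lam
  have htl : (0:ℝ) < t ^ lam := Real.rpow_pos_of_pos ht0 lam
  have hmul : t ^ lam * (1 + (2 ^ lam - 1) * (1/t)) ≤ t ^ lam * (1 + 1/t) ^ lam :=
    mul_le_mul_of_nonneg_left hch htl.le
  have he1 : t ^ lam * (1 + 1/t) ^ lam = (1+t) ^ lam := by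
    rw [← Real.mul_rpow ht0.le (by positivity)]
    congr 1
    field_simp
    ring
  have he2 : t ^ lam * (1 + (2 ^ lam - 1) * (1/t)) = t ^ lam + (2 ^ lam - 1) * t ^ (lam - 1) := by
    rw [Real.rpow_sub ht0, Real.rpow_one]
    field_simp
  rw [he1, he2] at hmul
  linarith

/-- `κ + 1 ≤ 2^κ` for `κ ≥ 1`. -/
lemma scalar1 (κ : ℝ) (h : 1 ≤ κ) : κ + 1 ≤ (2:ℝ) ^ κ := by
  have h2 : (2:ℝ) ^ κ = 2 * 2 ^ (κ - 1) := by
    have h := Real.rpow_add two_pos 1 (κ-1)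
    rw [Real.rpow_one, show (1:ℝ) + (κ-1) = κ by ring] at h
    exact h
  have hexp : 1 + Real.log 2 * (κ - 1) ≤ 2 ^ (κ - 1) := by
    rw [Real.rpow_def_of_pos two_pos]
    have := Real.add_one_le_exp (Real.log 2 * (κ-1))
    linarith
  have hlog : (0.6931471803 : ℝ) < Real.log 2 := Real.log_two_gt_d9
  nlinarith [hexp, mul_nonneg (by linarith : (0:ℝ) ≤ κ - 1) (by linarith : (0:ℝ) ≤ Real.log 2)]

/-- The chi inequality for all κ ≥ 1: `(2^κ-1) t^((κ-1)/2) ≤ (1+t)^κ - t^κ` on `t ≥ 1`. -/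
lemma chi (κ : ℝ) (hκ : 1 ≤ κ) : ∀ t : ℝ, 1 ≤ t →
    ((2:ℝ) ^ κ - 1) * t ^ ((κ-1)/2) ≤ (1+t) ^ κ - t ^ κ := by
  obtain ⟨n, hn⟩ := exists_nat_ge κ
  induction n generalizing κ with
  | zero =>
    intro t ht
    exfalso; push_cast at hn; linarith
  | succ n ih =>
    -- either κ ≤ 2 (base) or κ - 1 ≥ 1 (step via ih... careful: need κ-1 ≤ n)
    intro t ht
    -- common scalar facts
    have h2κ : (2:ℝ) ^ κ = 2 * 2 ^ (κ - 1) := by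
      have h := Real.rpow_add two_pos 1 (κ-1)
      rw [Real.rpow_one, show (1:ℝ) + (κ-1) = κ by ring] at h
      exact h
    have hD0 : (0:ℝ) ≤ 2 ^ (κ-1) - 1 := by
      have : (1:ℝ) = 2 ^ (0:ℝ) := by norm_num
      nlinarith [Real.rpow_le_rpow_of_exponent_le (by norm_num : (1:ℝ) ≤ 2)
        (by linarith : (0:ℝ) ≤ κ - 1), Real.rpow_zero (2:ℝ)]
    have hscal : ((2:ℝ) ^ κ - 1) * ((κ-1)/2) ≤ κ * (2 ^ (κ-1) - 1) := by
      have := scalar1 κ hκ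
      nlinarith
    -- lower bound on (1+x)^(κ-1) - x^(κ-1) of form D * x^e with e ≥ (κ-3)/2
    have key : ∀ (e : ℝ), (κ-3)/2 ≤ e →
        (∀ x : ℝ, 1 < x → (2 ^ (κ-1) - 1) * x ^ e ≤ (1+x) ^ (κ-1) - x ^ (κ-1)) →
        ((2:ℝ) ^ κ - 1) * t ^ ((κ-1)/2) ≤ (1+t) ^ κ - t ^ κ := by
      intro e he hLB
      have hKM := key_mono κ ((2:ℝ)^κ - 1) ((κ-1)/2) 0 ?_ t ht
      · simpa using hKM
      · intro x hx
        have hx0 : (0:ℝ) < x := by linarith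
        have hLBx := hLB x hx
        have hmonoexp : x ^ ((κ-1)/2 - 1) ≤ x ^ e :=
          Real.rpow_le_rpow_of_exponent_le hx.le (by linarith)
        have hxe0 : (0:ℝ) ≤ x ^ ((κ-1)/2 - 1) := (Real.rpow_pos_of_pos hx0 _).le
        calc ((2:ℝ)^κ - 1) * ((κ-1)/2 * x ^ ((κ-1)/2 - 1))
            = (((2:ℝ)^κ - 1) * ((κ-1)/2)) * x ^ ((κ-1)/2 - 1) := by ring
          _ ≤ (κ * (2 ^ (κ-1) - 1)) * x ^ ((κ-1)/2 - 1) := by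
              apply mul_le_mul_of_nonneg_right hscal hxe0
          _ ≤ (κ * (2 ^ (κ-1) - 1)) * x ^ e := by
              apply mul_le_mul_of_nonneg_left hmonoexp
              exact mul_nonneg (by linarith) hD0
          _ = κ * ((2 ^ (κ-1) - 1) * x ^ e) := by ring
          _ ≤ κ * ((1+x) ^ (κ-1) - x ^ (κ-1)) := by
              apply mul_le_mul_of_nonneg_left hLBx (by linarith)
          _ = κ * (1+x) ^ (κ-1) - κ * x ^ (κ-1) := by ring
    by_cases hcase : κ ≤ 2
    · -- base case: use chord bound, e = κ - 2
      apply key (κ - 2) (by linarith)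
      intro x hx
      have hbd := base_diff (κ-1) x (by linarith) (by linarith) hx.le
      rw [show κ - 1 - 1 = κ - 2 by ring] at hbd
      exact hbd
    · -- step: κ > 2, use ih at κ - 1
      push_neg at hcase
      have hih := ih (κ - 1) (by linarith) (by push_cast at hn ⊢; linarith)
      apply key ((κ-2)/2) (by linarith)
      intro x hx
      have := hih x hx.le
      have hee : (κ - 1 - 1)/2 = (κ-2)/2 := by ring
      rw [hee] at this
      exact this

/-- main one-variable inequality: for `p ≥ 2`, `t ≥ 1`:
`1 + t^p + (2^p - 2) t^(p/2) ≤ (1+t)^p`. -/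
lemma psi (p : ℝ) (hp : 2 ≤ p) (t : ℝ) (ht : 1 ≤ t) :
    1 + t ^ p + ((2:ℝ) ^ p - 2) * t ^ (p/2) ≤ (1+t) ^ p := by
  have h2p : (2:ℝ) ^ p = 2 * 2 ^ (p - 1) := by
    have h := Real.rpow_add two_pos 1 (p-1)
    rw [Real.rpow_one, show (1:ℝ) + (p-1) = p by ring] at h
    exact h
  have hKM := key_mono p ((2:ℝ)^p - 2) (p/2) 1 ?_ t ht
  · have : (2:ℝ)^p - 1 - ((2:ℝ)^p - 2) - 1 = 0 := by ring
    rw [this] at hKM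
    linarith
  · intro x hx
    have hchi := chi (p-1) (by linarith) x hx.le
    have hee : (p - 1 - 1)/2 = p/2 - 1 := by ring
    rw [hee] at hchi
    have hx0 : (0:ℝ) < x := by linarith
    have hxe0 : (0:ℝ) ≤ x ^ (p/2 - 1) := (Real.rpow_pos_of_pos hx0 _).le
    have hco : ((2:ℝ)^p - 2) * (p/2) = p * ((2:ℝ)^(p-1) - 1) := by
      rw [h2p]; ring
    calc ((2:ℝ)^p - 2) * (p/2 * x ^ (p/2 - 1))
        = (((2:ℝ)^p - 2) * (p/2)) * x ^ (p/2 - 1) := by ring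
      _ = p * (((2:ℝ)^(p-1) - 1) * x ^ (p/2 - 1)) := by rw [hco]; ring
      _ ≤ p * ((1+x) ^ (p-1) - x ^ (p-1)) := by
          apply mul_le_mul_of_nonneg_left hchi (by linarith)
      _ = p * (1+x) ^ (p-1) - p * x ^ (p-1) := by ring

/-- Key two-variable lemma. -/
lemma key2 (p : ℝ) (hp : 2 ≤ p) (a b : ℝ) (ha : 0 < a) (hb : 0 < b) (hba : b ≤ a)
    (hab : a + b = 1) :
    a ^ p + b ^ p + ((2:ℝ) ^ p - 2) * (a ^ (p/2) * b ^ (p/2)) ≤ 1 := by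
  set t := a / b with htdef
  have ht : 1 ≤ t := (one_le_div hb).mpr hba
  have ht0 : 0 < t := by linarith
  have hpsi := psi p hp t ht
  have hbp : (0:ℝ) < b ^ p := Real.rpow_pos_of_pos hb p
  have hmul := mul_le_mul_of_nonneg_left hpsi hbp.le
  have hbt : b * t = a := by
    rw [htdef]
    field_simp
  have e1 : b ^ p * (1+t) ^ p = 1 := by
    rw [← Real.mul_rpow hb.le (by positivity)]
    have hh : b * (1 + t) = 1 := by
      rw [mul_add, mul_one, hbt]
      linarith
    rw [hh, Real.one_rpow]
  have e2 : b ^ p * t ^ p = a ^ p := by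
    rw [← Real.mul_rpow hb.le ht0.le, hbt]
  have e3 : b ^ p * t ^ (p/2) = a ^ (p/2) * b ^ (p/2) := by
    have hsplit : b ^ p = b ^ (p/2) * b ^ (p/2) := by
      rw [← Real.rpow_add hb]; ring_nf
    rw [hsplit, mul_assoc, ← Real.mul_rpow hb.le ht0.le]
    rw [hbt]
    ring
  calc a ^ p + b ^ p + ((2:ℝ) ^ p - 2) * (a ^ (p/2) * b ^ (p/2))
      = b ^ p * (1 + t ^ p + ((2:ℝ)^p - 2) * t ^ (p/2)) := by
        rw [mul_add, mul_add, mul_one, e2, mul_comm ((2:ℝ)^p - 2) (a ^ (p/2) * b ^ (p/2))]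
        rw [← e3]; ring
    _ ≤ b ^ p * (1+t) ^ p := hmul
    _ = 1 := e1

/-- For `p ≥ 2` and `0 ≤ β < 2^{p−1} − 1`, for every `s ∈ (0,1)` one has
`s^p + (1 − s)^p + 2β s^{p/2}(1 − s)^{p/2} < 1`. -/
theorem h_beta_lt_one (p : ℝ) (hp : 2 ≤ p) (beta : ℝ) (hbeta0 : 0 ≤ beta)
    (hbeta : beta < 2 ^ (p - 1) - 1) (s : ℝ) (hs : s ∈ Set.Ioo (0 : ℝ) 1) :
    s ^ p + (1 - s) ^ p + 2 * beta * s ^ (p / 2) * (1 - s) ^ (p / 2) < 1 := by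
  obtain ⟨hs0, hs1⟩ := hs
  have h1s : 0 < 1 - s := by linarith
  have hcross : (0:ℝ) < s ^ (p/2) * (1-s) ^ (p/2) :=
    mul_pos (Real.rpow_pos_of_pos hs0 _) (Real.rpow_pos_of_pos h1s _)
  have h2p : (2:ℝ) ^ p = 2 * 2 ^ (p - 1) := by
    have h := Real.rpow_add two_pos 1 (p-1)
    rw [Real.rpow_one, show (1:ℝ) + (p-1) = p by ring] at h
    exact h
  have hb2 : 2 * beta < (2:ℝ) ^ p - 2 := by rw [h2p]; linarith
  have hstep1 : 2 * beta * s ^ (p/2) * (1-s) ^ (p/2)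
      < ((2:ℝ)^p - 2) * (s ^ (p/2) * (1-s) ^ (p/2)) := by
    rw [mul_assoc]
    exact mul_lt_mul_of_pos_right hb2 hcross
  have hkey : s ^ p + (1-s) ^ p + ((2:ℝ)^p - 2) * (s ^ (p/2) * (1-s) ^ (p/2)) ≤ 1 := by
    rcases le_total (1-s) s with hc | hc
    · exact key2 p hp s (1-s) hs0 h1s hc (by ring)
    · have := key2 p hp (1-s) s h1s hs0 hc (by ring)
      linarith [this]
  linarith
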